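/- Let X be a real Banach space, x̄ ∈ X, F : X → X a continuously differentiable map, and A : X → X an injective bounded linear map. Fix R ∈ [0,∞] and nonnegative constants Y, Z₁, Z₂ such that ‖A F(x̄)‖ ≤ Y, ‖I − A∘DF(x̄)‖ ≤ Z₁ (operator norm), and ‖A∘(DF(x) − DF(x̄))‖ ≤ Z₂‖x − x̄‖ for all x with ‖x − x̄‖ ≤ R. If there exists r ∈ [0, R] such that Y + r(Z₁ − 1) + (r²/2)Z₂ ≤ 0 and Z₁ + rZ₂ < 1, then there exists a unique x⋆ with ‖x⋆ − x̄‖ ≤ r and F(x⋆) = 0. -/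

import Mathlib

open scoped ENNReal
/-- Newton–Kantorovich type contraction theorem (radii polynomial approach):
existence and local uniqueness of a zero of `F` near the numerical approximation `xbar`. -/
theorem radii_polynomial_contraction
    {X : Type*} [NormedAddCommGroup X] [NormedSpace ℝ X] [CompleteSpace X]
    (F : X → X) (hF : ContDiff ℝ 1 F)
    (xbar : X) (A : X →L[ℝ] X) (hA : Function.Injective A)
    (R : ℝ≥0∞) (Y Z₁ Z₂ : ℝ) (hY0 : 0 ≤ Y) (hZ₁0 : 0 ≤ Z₁) (hZ₂0 : 0 ≤ Z₂)
    (hY : ‖A (F xbar)‖ ≤ Y)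
    (hZ₁ : ‖ContinuousLinearMap.id ℝ X - A.comp (fderiv ℝ F xbar)‖ ≤ Z₁)
    (hZ₂ : ∀ x : X, ENNReal.ofReal ‖x - xbar‖ ≤ R →
      ‖A.comp (fderiv ℝ F x - fderiv ℝ F xbar)‖ ≤ Z₂ * ‖x - xbar‖)
    (r : ℝ) (hr0 : 0 ≤ r) (hrR : ENNReal.ofReal r ≤ R)
    (hP : Y + r * (Z₁ - 1) + r ^ 2 / 2 * Z₂ ≤ 0)
    (hcontr : Z₁ + r * Z₂ < 1) :
    ∃! x : X, ‖x - xbar‖ ≤ r ∧ F x = 0 := by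
  classical
  set T : X → X := fun x => x - A (F x) with hTdef
  have hFd : Differentiable ℝ F := hF.differentiable one_ne_zero
  have hTd : ∀ x : X, HasFDerivAt T
      (ContinuousLinearMap.id ℝ X - A.comp (fderiv ℝ F x)) x := by
    intro x
    exact (hasFDerivAt_id x).sub (A.hasFDerivAt.comp x (hFd x).hasFDerivAt)
  -- derivative bound on the ball
  have hDT : ∀ x : X, ‖x - xbar‖ ≤ r →
      ‖ContinuousLinearMap.id ℝ X - A.comp (fderiv ℝ F x)‖ ≤ Z₁ + Z₂ * ‖x - xbar‖ := by
    intro x hx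
    have hxR : ENNReal.ofReal ‖x - xbar‖ ≤ R :=
      le_trans (ENNReal.ofReal_le_ofReal hx) hrR
    have h2 := hZ₂ x hxR
    have hsplit : ContinuousLinearMap.id ℝ X - A.comp (fderiv ℝ F x)
        = (ContinuousLinearMap.id ℝ X - A.comp (fderiv ℝ F xbar))
          - A.comp (fderiv ℝ F x - fderiv ℝ F xbar) := by
      rw [ContinuousLinearMap.comp_sub]; abel
    rw [hsplit]
    exact (norm_sub_le _ _).trans (add_le_add hZ₁ h2)
  set κ : ℝ := Z₁ + r * Z₂ with hκdef
  have hκ0 : 0 ≤ κ := by positivity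
  -- Lipschitz estimate on the closed ball
  have hLip : ∀ x ∈ Metric.closedBall xbar r, ∀ y ∈ Metric.closedBall xbar r,
      ‖T y - T x‖ ≤ κ * ‖y - x‖ := by
    intro x hx y hy
    refine (convex_closedBall xbar r).norm_image_sub_le_of_norm_hasFDerivWithin_le
      (f' := fun z => ContinuousLinearMap.id ℝ X - A.comp (fderiv ℝ F z))
      (fun z hz => (hTd z).hasFDerivWithinAt) ?_ hx hy
    intro z hz
    rw [Metric.mem_closedBall, dist_eq_norm] at hz
    refine (hDT z hz).trans ?_
    have := mul_le_mul_of_nonneg_left hz hZ₂0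
    nlinarith
  -- refined estimate: ‖T x - T xbar‖ ≤ Z₁ * d + Z₂ * d^2 / 2
  have hfine : ∀ x : X, ‖x - xbar‖ ≤ r →
      ‖T x - T xbar‖ ≤ Z₁ * ‖x - xbar‖ + Z₂ * ‖x - xbar‖ ^ 2 / 2 := by
    intro x hx
    set d : ℝ := ‖x - xbar‖ with hd
    have hd0 : 0 ≤ d := norm_nonneg _
    set g : ℝ → X := fun t => T (xbar + t • (x - xbar)) - T xbar with hgdef
    have hline : ∀ t : ℝ, HasDerivAt (fun t : ℝ => xbar + t • (x - xbar)) (x - xbar) t := by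
      intro t
      simpa using ((hasDerivAt_id t).smul_const (x - xbar)).const_add xbar
    have hg' : ∀ t : ℝ, HasDerivAt g
        ((ContinuousLinearMap.id ℝ X - A.comp (fderiv ℝ F (xbar + t • (x - xbar)))) (x - xbar))
        t := by
      intro t
      exact (((hTd (xbar + t • (x - xbar))).comp_hasDerivAt t (hline t)).sub_const (T xbar))
    set B : ℝ → ℝ := fun t => Z₁ * d * t + Z₂ * d ^ 2 * (t ^ 2 / 2) with hBdef
    set B' : ℝ → ℝ := fun t => Z₁ * d + Z₂ * d ^ 2 * t with hB'def
    have hB : ∀ t : ℝ, HasDerivAt B (B' t) t := by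
      intro t
      have h1 : HasDerivAt (fun t : ℝ => Z₁ * d * t) (Z₁ * d) t := by
        simpa using (hasDerivAt_id t).const_mul (Z₁ * d)
      have h2 : HasDerivAt (fun t : ℝ => Z₂ * d ^ 2 * (t ^ 2 / 2)) (Z₂ * d ^ 2 * t) t := by
        have := ((hasDerivAt_pow 2 t).div_const 2).const_mul (Z₂ * d ^ 2)
        simpa [mul_comm, mul_assoc, mul_left_comm] using this
      exact h1.add h2
    have key : ∀ t ∈ Set.Icc (0:ℝ) 1, ‖g t‖ ≤ B t := by
      refine image_norm_le_of_norm_deriv_right_le_deriv_boundary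
        (f' := fun t => (ContinuousLinearMap.id ℝ X
          - A.comp (fderiv ℝ F (xbar + t • (x - xbar)))) (x - xbar))
        (fun t _ => (hg' t).continuousAt.continuousWithinAt)
        (fun t ht => (hg' t).hasDerivWithinAt) ?_ hB ?_
      · simp [g, B]
      · intro t ht
        obtain ⟨ht0, ht1⟩ := ht
        have hmem : ‖(xbar + t • (x - xbar)) - xbar‖ ≤ r := by
          have : ‖(xbar + t • (x - xbar)) - xbar‖ = t * d := by
            simp [norm_smul, abs_of_nonneg ht0, hd]
          rw [this]
          calc t * d ≤ 1 * d := by nlinarith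
            _ ≤ r := by simpa using hx
        have hnd : ‖(xbar + t • (x - xbar)) - xbar‖ = t * d := by
          simp [norm_smul, abs_of_nonneg ht0, hd]
        calc ‖(ContinuousLinearMap.id ℝ X
              - A.comp (fderiv ℝ F (xbar + t • (x - xbar)))) (x - xbar)‖
            ≤ ‖ContinuousLinearMap.id ℝ X
              - A.comp (fderiv ℝ F (xbar + t • (x - xbar)))‖ * d :=
              ContinuousLinearMap.le_opNorm _ _
          _ ≤ (Z₁ + Z₂ * (t * d)) * d := by
              have := hDT _ hmem
              rw [hnd] at this
              exact mul_le_mul_of_nonneg_right this hd0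
          _ = B' t := by ring
    have := key 1 (by norm_num)
    have hg1 : g 1 = T x - T xbar := by simp [g]
    rw [hg1] at this
    refine this.trans_eq ?_
    simp [B]; ring
  -- T maps the closed ball into itself
  have hTxbar : ‖T xbar - xbar‖ ≤ Y := by
    have : T xbar - xbar = -(A (F xbar)) := by simp [T]
    rw [this, norm_neg]; exact hY
  have hmaps : Set.MapsTo T (Metric.closedBall xbar r) (Metric.closedBall xbar r) := by
    intro x hx
    rw [Metric.mem_closedBall, dist_eq_norm] at hx ⊢
    have h1 : ‖T x - xbar‖ ≤ ‖T x - T xbar‖ + ‖T xbar - xbar‖ := norm_sub_le_norm_sub_add_norm_sub _ _ _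
    have h2 := hfine x hx
    have hd0 : (0:ℝ) ≤ ‖x - xbar‖ := norm_nonneg _
    have hd2 : ‖x - xbar‖ ^ 2 ≤ r ^ 2 := pow_le_pow_left₀ hd0 hx 2
    nlinarith [mul_le_mul_of_nonneg_left hx hZ₁0, mul_le_mul_of_nonneg_left hd2 hZ₂0]
  -- contraction on the ball
  set K : NNReal := Real.toNNReal κ with hKdef
  have hKκ : (K : ℝ) = κ := Real.coe_toNNReal κ hκ0
  have hcontracting : ContractingWith K (hmaps.restrict T _ _) := by
    constructor
    · rw [← NNReal.coe_lt_coe, hKκ]; exact hcontr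
    · refine LipschitzWith.of_dist_le_mul ?_
      rintro ⟨x, hx⟩ ⟨y, hy⟩
      simp only [Set.MapsTo.restrict, Subtype.dist_eq, dist_eq_norm]
      rw [hKκ]
      exact hLip y hy x hx
  have hxbarmem : xbar ∈ Metric.closedBall xbar r := by
    simp [Metric.mem_closedBall, hr0]
  obtain ⟨y, hymem, hyfix, -, -⟩ := hcontracting.exists_fixedPoint'
    (Metric.isClosed_closedBall.isComplete) hmaps hxbarmem (edist_ne_top _ _)
  have hyF : F y = 0 := by
    have h1 : A (F y) = 0 := by
      have := hyfix
      simp only [Function.IsFixedPt, T] at this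
      have := sub_eq_self.mp this
      exact this
    have h2 : A (F y) = A 0 := by rw [h1, map_zero]
    exact hA h2
  rw [Metric.mem_closedBall, dist_eq_norm] at hymem
  refine ⟨y, ⟨hymem, hyF⟩, ?_⟩
  rintro z ⟨hzmem, hzF⟩
  have hTz : T z = z := by simp [T, hzF]
  have hTy : T y = y := hyfix
  have hest : ‖z - y‖ ≤ κ * ‖z - y‖ := by
    have := hLip y (by rwa [Metric.mem_closedBall, dist_eq_norm]) z
      (by rwa [Metric.mem_closedBall, dist_eq_norm])
    rwa [hTz, hTy] at this
  have hzy : ‖z - y‖ = 0 := by nlinarith [norm_nonneg (z - y)]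
  exact sub_eq_zero.mp (norm_eq_zero.mp hzy)
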